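/- arXiv:2505.22325 — 3 statements merged into one kernel-verified Lean document; each statement's English description precedes it below -/
import Mathlib

section
/- Let p ∈ [1,∞] with conjugate exponent p'. For every nonzero signal f : V → X, the uncertainty inequality ‖f‖_p · ‖f̂‖_p / (‖f‖_∞ · ‖f̂‖_∞) ≥ 1 / (κ_{p'}(U) · κ_{p'}(U*)) holds. In particular, ‖f‖_1‖f̂‖_1 / (‖f‖_∞‖f̂‖_∞) ≥ 1/κ_∞(U)² and ‖f‖_2‖f̂‖_2 / (‖f‖_∞‖f̂‖_∞) ≥ 1. -/
open Finset
open scoped ENNReal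

/-- The `L^p` norm of a signal `f : Fin N → E` (sup-norm when `p = ∞`). -/
noncomputable def gsNorm {E : Type*} [NormedAddCommGroup E] {N : ℕ} (p : ℝ≥0∞)
    (f : Fin N → E) : ℝ :=
  if p = ∞ then ⨆ n, ‖f n‖ else (∑ n, ‖f n‖ ^ p.toReal) ^ (1 / p.toReal)

/-- `u k` is the `k`-th column of a unitary matrix, i.e. the family of columns is
orthonormal for the standard inner product on `𝕂^N` (hence an orthonormal basis). -/
def OrthoBasis {𝕂 : Type*} [RCLike 𝕂] {N : ℕ} (u : Fin N → Fin N → 𝕂) : Prop :=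
  ∀ k l : Fin N, ∑ n, (starRingEnd 𝕂) (u k n) * u l n = if k = l then (1 : 𝕂) else 0

/-- Graph Fourier transform: `f̂ k = ∑ n, conj (u k n) • f n`. -/
noncomputable def gft {𝕂 : Type*} [RCLike 𝕂] {X : Type*} [NormedAddCommGroup X]
    [NormedSpace 𝕂 X] {N : ℕ} (u : Fin N → Fin N → 𝕂) (f : Fin N → X) : Fin N → X :=
  fun k => ∑ n, (starRingEnd 𝕂) (u k n) • f n

/-- `p`-coherence `κ_p(U)`: the maximum of the `ℓ^p` norms of the columns of `U`. -/
noncomputable def coh {𝕂 : Type*} [RCLike 𝕂] {N : ℕ} (p : ℝ≥0∞)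
    (u : Fin N → Fin N → 𝕂) : ℝ :=
  ⨆ k, gsNorm p (u k)

/-- Mixed norm `‖U‖_{p,q}`: the `ℓ^q` norm of the vector of `ℓ^p` norms of the columns. -/
noncomputable def mixNorm {𝕂 : Type*} [RCLike 𝕂] {N : ℕ} (p q : ℝ≥0∞)
    (u : Fin N → Fin N → 𝕂) : ℝ :=
  gsNorm q (fun k => gsNorm p (u k))

/-- Graph convolution of a scalar signal `α` with a signal `f`:
`(α*f)(n) = ∑ k, u k n • (α̂ k • f̂ k)`. -/
noncomputable def gconv {𝕂 : Type*} [RCLike 𝕂] {X : Type*} [NormedAddCommGroup X]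
    [NormedSpace 𝕂 X] {N : ℕ} (u : Fin N → Fin N → 𝕂) (α : Fin N → 𝕂)
    (f : Fin N → X) : Fin N → X :=
  fun n => ∑ k, u k n • (gft u α k • gft u f k)

/-- Graph translation operator `T_m f (n) = ∑ k, (u k n * conj (u k m)) • f̂ k`. -/
noncomputable def gtrans {𝕂 : Type*} [RCLike 𝕂] {X : Type*} [NormedAddCommGroup X]
    [NormedSpace 𝕂 X] {N : ℕ} (u : Fin N → Fin N → 𝕂) (m : Fin N)
    (f : Fin N → X) : Fin N → X :=
  fun n => ∑ k, (u k n * (starRingEnd 𝕂) (u k m)) • gft u f k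


section AuxLemmas

variable {𝕂 : Type*} [RCLike 𝕂] {X : Type*} [NormedAddCommGroup X] [NormedSpace 𝕂 X] {N : ℕ}

lemma gsNorm_nonneg {E : Type*} [NormedAddCommGroup E] (p : ℝ≥0∞) (f : Fin N → E) :
    0 ≤ gsNorm p f := by
  unfold gsNorm
  split
  · exact Real.iSup_nonneg fun n => norm_nonneg _
  · positivity

lemma gsNorm_top {E : Type*} [NormedAddCommGroup E] (f : Fin N → E) :
    gsNorm ∞ f = ⨆ n, ‖f n‖ := by simp [gsNorm]

lemma gsNorm_congr {E F : Type*} [NormedAddCommGroup E] [NormedAddCommGroup F] (p : ℝ≥0∞)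
    (a : Fin N → E) (b : Fin N → F) (h : ∀ n, ‖a n‖ = ‖b n‖) : gsNorm p a = gsNorm p b := by
  unfold gsNorm; simp only [h]

lemma gsNorm_two_eq_one {E : Type*} [NormedAddCommGroup E] (f : Fin N → E)
    (h : ∑ n, ‖f n‖ ^ 2 = 1) : gsNorm 2 f = 1 := by
  rw [gsNorm, if_neg (by simp)]
  have h2 : (2 : ℝ≥0∞).toReal = 2 := by simp
  rw [h2]
  have : ∀ n : Fin N, ‖f n‖ ^ (2:ℝ) = ‖f n‖ ^ (2:ℕ) := fun n => by
    rw [← Real.rpow_natCast]; norm_num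
  simp_rw [this, h, Real.one_rpow]

lemma gsNorm_top_pos (hN : 0 < N) (f : Fin N → X) (hf : f ≠ 0) : 0 < gsNorm ∞ f := by
  have hne : Nonempty (Fin N) := ⟨⟨0, hN⟩⟩
  obtain ⟨n, hn⟩ := Function.ne_iff.mp hf
  rw [gsNorm_top]
  exact lt_of_lt_of_le (norm_pos_iff.mpr hn) (le_ciSup (f := fun m => ‖f m‖) (Set.finite_range _).bddAbove n)

lemma holder_sum (hN : 0 < N) {p p' : ℝ≥0∞} (hpp' : 1/p + 1/p' = 1)
    (a b : Fin N → ℝ) (ha : ∀ n, 0 ≤ a n) (hb : ∀ n, 0 ≤ b n) :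
    ∑ n, a n * b n ≤ gsNorm p' a * gsNorm p b := by
  unfold gsNorm
  simp only [Real.norm_eq_abs]
  have hne : Nonempty (Fin N) := ⟨⟨0, hN⟩⟩
  have hconj : ENNReal.HolderConjugate p p' := ⟨by simpa [one_div] using hpp'⟩
  rcases eq_or_ne p 1 with hp1 | hp1
  · -- p = 1, p' = ∞
    have hp' : p' = ∞ := by
      have := ENNReal.HolderConjugate.inv_add_inv_eq_one p p'
      simp [hp1] at this
      exact this
    rw [if_pos hp', if_neg (by simp [hp1]), hp1]
    simp only [ENNReal.toReal_one, Real.rpow_one, one_div_one]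
    calc ∑ n, a n * b n ≤ ∑ n, (⨆ m, |a m|) * b n := by
          refine Finset.sum_le_sum fun n _ => mul_le_mul_of_nonneg_right ?_ (hb n)
          exact (le_abs_self _).trans
            (le_ciSup (f := fun m => |a m|) (Set.finite_range _).bddAbove n)
      _ = (⨆ m, |a m|) * ∑ n, b n := by rw [Finset.mul_sum]
      _ ≤ _ := by
          refine mul_le_mul_of_nonneg_left (Finset.sum_le_sum fun n _ => le_abs_self _)
            (Real.iSup_nonneg fun n => abs_nonneg _)
  rcases eq_or_ne p ∞ with hpt | hpt
  · -- p = ∞, p' = 1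
    have hp' : p' = 1 := by
      have := ENNReal.HolderConjugate.inv_add_inv_eq_one p p'
      rw [hpt] at this
      simp at this
      simpa using congrArg (·⁻¹) this
    rw [if_pos hpt, if_neg (by simp [hp']), hp']
    simp only [ENNReal.toReal_one, Real.rpow_one, one_div_one]
    calc ∑ n, a n * b n ≤ ∑ n, a n * (⨆ m, |b m|) := by
          refine Finset.sum_le_sum fun n _ => mul_le_mul_of_nonneg_left ?_ (ha n)
          exact (le_abs_self _).trans
            (le_ciSup (f := fun m => |b m|) (Set.finite_range _).bddAbove n)
      _ = (∑ n, a n) * (⨆ m, |b m|) := by rw [Finset.sum_mul]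
      _ ≤ _ := by
          refine mul_le_mul_of_nonneg_right (Finset.sum_le_sum fun n _ => le_abs_self _)
            (Real.iSup_nonneg fun n => abs_nonneg _)
  · -- 1 < p < ∞
    have hp0 : p ≠ 0 := ENNReal.HolderConjugate.ne_zero p p'
    have hp'0 : p' ≠ 0 := ENNReal.HolderConjugate.ne_zero p' p
    have hp't : p' ≠ ∞ := by
      rintro rfl
      have := ENNReal.HolderConjugate.inv_add_inv_eq_one p ∞
      simp at this
      exact hp1 (by simpa using congrArg (·⁻¹) this)
    have hsum : 1 / p.toReal + 1 / p'.toReal = 1 := by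
      have := congrArg ENNReal.toReal (ENNReal.HolderConjugate.inv_add_inv_eq_one p p')
      rw [ENNReal.toReal_add (by simpa using hp0) (by simpa using hp'0)] at this
      simpa [one_div] using this
    have h1p : 1 < p.toReal := by
      have : 1 < p := lt_of_le_of_ne (ENNReal.HolderConjugate.one_le p p') (Ne.symm hp1)
      have := (ENNReal.toReal_lt_toReal (by simp) hpt).mpr this
      simpa using this
    have hrconj : (p.toReal).HolderConjugate p'.toReal :=
      Real.holderConjugate_iff.mpr ⟨h1p, by rwa [one_div, one_div] at hsum⟩
    rw [if_neg hp't, if_neg hpt]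
    exact Real.inner_le_Lp_mul_Lq Finset.univ a b hrconj.symm

lemma norm_sum_smul_le (hN : 0 < N) {p p' : ℝ≥0∞} (hpp' : 1/p + 1/p' = 1)
    (c : Fin N → 𝕂) (g : Fin N → X) :
    ‖∑ n, c n • g n‖ ≤ gsNorm p' c * gsNorm p g := by
  have h1 : ‖∑ n, c n • g n‖ ≤ ∑ n, ‖c n‖ * ‖g n‖ :=
    (norm_sum_le _ _).trans (le_of_eq (Finset.sum_congr rfl fun n _ => norm_smul _ _))
  refine h1.trans ?_
  have h2 := holder_sum hN hpp' (fun n => ‖c n‖) (fun n => ‖g n‖)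
    (fun n => norm_nonneg _) (fun n => norm_nonneg _)
  rwa [gsNorm_congr p' (fun n => ‖c n‖) c (fun n => norm_norm _),
    gsNorm_congr p (fun n => ‖g n‖) g (fun n => norm_norm _)] at h2

open Matrix in
lemma ortho_rows (u : Fin N → Fin N → 𝕂) (hU : OrthoBasis u) (n m : Fin N) :
    ∑ k, (starRingEnd 𝕂) (u k n) * u k m = if n = m then (1 : 𝕂) else 0 := by
  have h1 : (Matrix.of u) * (Matrix.of u)ᴴ = 1 := by
    ext k l
    simp only [Matrix.mul_apply, Matrix.conjTranspose_apply, Matrix.of_apply, Matrix.one_apply]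
    have : ∑ n, u k n * star (u l n) = star (∑ n, (starRingEnd 𝕂) (u k n) * u l n) := by
      rw [star_sum]
      refine Finset.sum_congr rfl fun n _ => ?_
      rw [StarMul.star_mul]
      simp [RCLike.star_def, mul_comm]
    rw [this, hU k l]
    split <;> simp
  have h2 : (Matrix.of u)ᴴ * (Matrix.of u) = 1 := mul_eq_one_comm.mp h1
  have := congrFun (congrFun h2 n) m
  simpa [Matrix.mul_apply, Matrix.conjTranspose_apply, Matrix.one_apply, RCLike.star_def]
    using this

lemma gft_inv (u : Fin N → Fin N → 𝕂) (hU : OrthoBasis u) (f : Fin N → X) (n : Fin N) :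
    ∑ k, u k n • gft u f k = f n := by
  unfold gft
  calc ∑ k, u k n • ∑ m, (starRingEnd 𝕂) (u k m) • f m
      = ∑ k, ∑ m, (u k n * (starRingEnd 𝕂) (u k m)) • f m := by
        refine Finset.sum_congr rfl fun k _ => ?_
        rw [Finset.smul_sum]
        exact Finset.sum_congr rfl fun m _ => smul_smul _ _ _
    _ = ∑ m, (∑ k, u k n * (starRingEnd 𝕂) (u k m)) • f m := by
        rw [Finset.sum_comm]
        exact Finset.sum_congr rfl fun m _ => (Finset.sum_smul).symm
    _ = ∑ m, (if m = n then (1:𝕂) else 0) • f m := by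
        refine Finset.sum_congr rfl fun m _ => ?_
        congr 1
        calc ∑ k, u k n * (starRingEnd 𝕂) (u k m)
            = ∑ k, (starRingEnd 𝕂) (u k m) * u k n :=
              Finset.sum_congr rfl fun k _ => mul_comm _ _
          _ = if m = n then 1 else 0 := ortho_rows u hU m n
    _ = f n := by simp [ite_smul]

lemma ortho_col_sq (u : Fin N → Fin N → 𝕂) (hU : OrthoBasis u) (k : Fin N) :
    ∑ n, ‖u k n‖ ^ 2 = 1 := by
  have := hU k k
  rw [if_pos rfl] at this
  have h2 : ∑ n, ((‖u k n‖ : 𝕂) ^ 2) = 1 := by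
    rw [← this]
    exact Finset.sum_congr rfl fun n _ => by rw [RCLike.conj_mul]
  have : ((∑ n, ‖u k n‖ ^ 2 : ℝ) : 𝕂) = ((1:ℝ) : 𝕂) := by push_cast; simpa using h2
  exact_mod_cast this

lemma ortho_row_sq (u : Fin N → Fin N → 𝕂) (hU : OrthoBasis u) (n : Fin N) :
    ∑ k, ‖u k n‖ ^ 2 = 1 := by
  have := ortho_rows u hU n n
  rw [if_pos rfl] at this
  have h2 : ∑ k, ((‖u k n‖ : 𝕂) ^ 2) = 1 := by
    rw [← this]
    exact Finset.sum_congr rfl fun k _ => by rw [RCLike.conj_mul]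
  have : ((∑ k, ‖u k n‖ ^ 2 : ℝ) : 𝕂) = ((1:ℝ) : 𝕂) := by push_cast; simpa using h2
  exact_mod_cast this

lemma coh_nonneg (hN : 0 < N) (p : ℝ≥0∞) (u : Fin N → Fin N → 𝕂) : 0 ≤ coh p u := by
  have hne : Nonempty (Fin N) := ⟨⟨0, hN⟩⟩
  exact Real.iSup_nonneg fun k => gsNorm_nonneg _ _

lemma coh_two_col (hN : 0 < N) (u : Fin N → Fin N → 𝕂) (hU : OrthoBasis u) :
    coh 2 u = 1 := by
  have hne : Nonempty (Fin N) := ⟨⟨0, hN⟩⟩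
  unfold coh
  have : ∀ k, gsNorm 2 (u k) = 1 := fun k => gsNorm_two_eq_one _ (ortho_col_sq u hU k)
  simp_rw [this]
  exact ciSup_const

lemma coh_two_row (hN : 0 < N) (u : Fin N → Fin N → 𝕂) (hU : OrthoBasis u) :
    coh 2 (fun n k => u k n) = 1 := by
  have hne : Nonempty (Fin N) := ⟨⟨0, hN⟩⟩
  unfold coh
  have : ∀ n, gsNorm 2 (fun k => u k n) = 1 := fun n =>
    gsNorm_two_eq_one _ (ortho_row_sq u hU n)
  simp_rw [this]
  exact ciSup_const

lemma ciSup_swap_le (hN : 0 < N) (g : Fin N → Fin N → ℝ) :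
    (⨆ n, ⨆ k, g k n) ≤ ⨆ k, ⨆ n, g k n := by
  have hne : Nonempty (Fin N) := ⟨⟨0, hN⟩⟩
  refine ciSup_le fun n => ciSup_le fun k => ?_
  exact le_trans (le_ciSup (f := fun m => g k m) (Set.finite_range _).bddAbove n)
    (le_ciSup (f := fun l => ⨆ m, g l m) (Set.finite_range _).bddAbove k)

lemma coh_top_comm (hN : 0 < N) (u : Fin N → Fin N → 𝕂) :
    coh ∞ (fun n k => u k n) = coh ∞ u := by
  unfold coh
  simp_rw [gsNorm_top]
  exact le_antisymm (ciSup_swap_le hN fun k n => ‖u k n‖)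
    (ciSup_swap_le hN fun n k => ‖u k n‖)

lemma main_ineq (hN : 0 < N) (u : Fin N → Fin N → 𝕂) (hU : OrthoBasis u)
    (p p' : ℝ≥0∞) (hpp' : 1 / p + 1 / p' = 1) (f : Fin N → X) (hf : f ≠ 0) :
    (gsNorm p f * gsNorm p (gft u f)) / (gsNorm ∞ f * gsNorm ∞ (gft u f)) ≥
      1 / (coh p' u * coh p' (fun n k => u k n)) := by
  have hne : Nonempty (Fin N) := ⟨⟨0, hN⟩⟩
  have hFne : gft u f ≠ 0 := by
    intro h
    apply hf
    funext n
    have := gft_inv u hU f n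
    rw [h] at this
    simpa using this.symm
  have hc : 0 < gsNorm ∞ f := gsNorm_top_pos hN f hf
  have hd : 0 < gsNorm ∞ (gft u f) := gsNorm_top_pos hN _ hFne
  have ha : 0 ≤ gsNorm p f := gsNorm_nonneg _ _
  have hb : 0 ≤ gsNorm p (gft u f) := gsNorm_nonneg _ _
  have hC1 : 0 ≤ coh p' u := coh_nonneg hN _ _
  have hC2 : 0 ≤ coh p' (fun n k => u k n) := coh_nonneg hN _ _
  have hA : gsNorm ∞ (gft u f) ≤ coh p' u * gsNorm p f := by
    rw [gsNorm_top]
    refine ciSup_le fun k => ?_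
    calc ‖gft u f k‖ ≤ gsNorm p' (fun n => (starRingEnd 𝕂) (u k n)) * gsNorm p f :=
          norm_sum_smul_le hN hpp' _ f
      _ = gsNorm p' (u k) * gsNorm p f := by
          rw [gsNorm_congr p' (fun n => (starRingEnd 𝕂) (u k n)) (u k)
            (fun n => RCLike.norm_conj _)]
      _ ≤ coh p' u * gsNorm p f := by
          refine mul_le_mul_of_nonneg_right ?_ ha
          exact le_ciSup (f := fun l => gsNorm p' (u l)) (Set.finite_range _).bddAbove k
  have hB : gsNorm ∞ f ≤ coh p' (fun n k => u k n) * gsNorm p (gft u f) := by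
    rw [gsNorm_top]
    refine ciSup_le fun n => ?_
    calc ‖f n‖ = ‖∑ k, u k n • gft u f k‖ := by rw [gft_inv u hU f n]
      _ ≤ gsNorm p' (fun k => u k n) * gsNorm p (gft u f) :=
          norm_sum_smul_le hN hpp' _ _
      _ ≤ coh p' (fun n k => u k n) * gsNorm p (gft u f) := by
          refine mul_le_mul_of_nonneg_right ?_ hb
          exact le_ciSup (f := fun m => gsNorm p' (fun k => u k m))
            (Set.finite_range _).bddAbove n
  rcases eq_or_lt_of_le (mul_nonneg hC1 hC2) with hC | hC
  · rw [ge_iff_le, ← hC, div_zero]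
    positivity
  · rw [ge_iff_le, div_le_div_iff₀ (by positivity) (mul_pos hc hd), one_mul]
    calc gsNorm ∞ f * gsNorm ∞ (gft u f)
        ≤ (coh p' (fun n k => u k n) * gsNorm p (gft u f)) * (coh p' u * gsNorm p f) :=
          mul_le_mul hB hA hd.le (by positivity)
      _ = gsNorm p f * gsNorm p (gft u f) * (coh p' u * coh p' (fun n k => u k n)) := by ring

end AuxLemmas

/-- uncertainty principle
`‖f‖_p‖f̂‖_p / (‖f‖_∞‖f̂‖_∞) ≥ 1/(κ_{p'}(U)·κ_{p'}(U*))`, with the particular cases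
`p = 1` and `p = 2`. -/
theorem gft_uncertainty_one {𝕂 : Type*} [RCLike 𝕂] {X : Type*} [NormedAddCommGroup X]
    [NormedSpace 𝕂 X] [CompleteSpace X] {N : ℕ} (hN : 0 < N)
    (u : Fin N → Fin N → 𝕂) (hU : OrthoBasis u)
    (p p' : ℝ≥0∞) (hp : 1 ≤ p) (hpp' : 1 / p + 1 / p' = 1) :
    ∀ f : Fin N → X, f ≠ 0 →
      ((gsNorm p f * gsNorm p (gft u f)) / (gsNorm ∞ f * gsNorm ∞ (gft u f)) ≥
        1 / (coh p' u * coh p' (fun n k => u k n))) ∧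
      ((gsNorm 1 f * gsNorm 1 (gft u f)) / (gsNorm ∞ f * gsNorm ∞ (gft u f)) ≥
        1 / (coh ∞ u) ^ 2) ∧
      ((gsNorm 2 f * gsNorm 2 (gft u f)) / (gsNorm ∞ f * gsNorm ∞ (gft u f)) ≥ 1) := by
  intro f hf
  refine ⟨main_ineq hN u hU p p' hpp' f hf, ?_, ?_⟩
  · have h := main_ineq hN u hU 1 ∞ (by simp) f hf
    rwa [coh_top_comm hN u, ← sq] at h
  · have h := main_ineq hN u hU 2 2 (by rw [one_div]; exact ENNReal.inv_two_add_inv_two) f hf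
    rw [coh_two_col hN u hU, coh_two_row hN u hU] at h
    simpa using h
end

section
/- (Young's inequality on graphs) Let s, t, w ∈ [1,∞] with 1/s + 1/t + 1/w = 1 and let p, q, r ∈ [1,∞], with p', q' the conjugate exponents of p, q. Then for every scalar signal α : V → 𝕂 and every signal f : V → X, ‖α*f‖_r ≤ ‖U*‖_{s,r} · ‖U‖_{p',t} · ‖U‖_{q',w} · ‖α‖_p · ‖f‖_q. -/
open Finset
open scoped ENNReal

section aux
variable {N : ℕ} {E : Type*} [NormedAddCommGroup E]

lemma gs_nonneg (p : ℝ≥0∞) (f : Fin N → E) : 0 ≤ gsNorm p f := by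
  unfold gsNorm; split
  · exact Real.iSup_nonneg fun n => norm_nonneg _
  · exact Real.rpow_nonneg (Finset.sum_nonneg fun n _ => Real.rpow_nonneg (norm_nonneg _) _) _

lemma gs_congr {F : Type*} [NormedAddCommGroup F] (p : ℝ≥0∞) {f : Fin N → E}
    {g : Fin N → F} (h : ∀ n, ‖f n‖ = ‖g n‖) : gsNorm p f = gsNorm p g := by
  unfold gsNorm; simp only [h]

lemma gs_mono (p : ℝ≥0∞) {f : Fin N → E} {g : Fin N → ℝ}
    (h : ∀ n, ‖f n‖ ≤ g n) : gsNorm p f ≤ gsNorm p g := by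
  have hg : ∀ n, 0 ≤ g n := fun n => le_trans (norm_nonneg _) (h n)
  unfold gsNorm; split
  · exact ciSup_mono (Set.Finite.bddAbove (Set.finite_range _))
      (fun n => (h n).trans (Real.norm_of_nonneg (hg n)).symm.le)
  · refine Real.rpow_le_rpow (Finset.sum_nonneg fun n _ => Real.rpow_nonneg (norm_nonneg _) _)
      (Finset.sum_le_sum fun n _ => ?_) (one_div_nonneg.2 ENNReal.toReal_nonneg)
    exact Real.rpow_le_rpow (norm_nonneg _)
      ((h n).trans (Real.norm_of_nonneg (hg n)).symm.le) ENNReal.toReal_nonneg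

lemma le_gs_top (f : Fin N → E) (n : Fin N) : ‖f n‖ ≤ gsNorm ∞ f := by
  unfold gsNorm
  rw [if_pos rfl]
  exact le_ciSup (f := fun n => ‖f n‖) (Set.Finite.bddAbove (Set.finite_range _)) n

lemma gs_one_eq_sum {g : Fin N → ℝ} (hg : ∀ n, 0 ≤ g n) :
    gsNorm (1 : ℝ≥0∞) g = ∑ n, g n := by
  unfold gsNorm
  simp [Real.norm_of_nonneg (hg _), Real.rpow_one]

lemma gs_const_mul (hN : 0 < N) {p : ℝ≥0∞} (hp : 1 ≤ p) {c : ℝ} (hc : 0 ≤ c)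
    {g : Fin N → ℝ} (hg : ∀ n, 0 ≤ g n) :
    gsNorm p (fun n => c * g n) = c * gsNorm p g := by
  haveI : Nonempty (Fin N) := Fin.pos_iff_nonempty.mp hN
  unfold gsNorm; split
  · simp only [Real.norm_of_nonneg (mul_nonneg hc (hg _)), Real.norm_of_nonneg (hg _)]
    rw [Real.mul_iSup_of_nonneg hc]
  · rename_i hne
    have hρ : 0 < p.toReal :=
      ENNReal.toReal_pos (lt_of_lt_of_le zero_lt_one hp).ne' hne
    simp only [Real.norm_of_nonneg (mul_nonneg hc (hg _)), Real.norm_of_nonneg (hg _)]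
    have : ∀ n : Fin N, (c * g n) ^ p.toReal = c ^ p.toReal * g n ^ p.toReal :=
      fun n => Real.mul_rpow hc (hg n)
    simp only [this]
    rw [← Finset.mul_sum, Real.mul_rpow (Real.rpow_nonneg hc _)
      (Finset.sum_nonneg fun n _ => Real.rpow_nonneg (hg n) _)]
    congr 1
    rw [← Real.rpow_mul hc, mul_one_div, div_self hρ.ne', Real.rpow_one]


lemma enn_facts {a b : ℝ≥0∞} (hab : 1/a + 1/b = 1) (ha : a ≠ ∞) (hb : b ≠ ∞) :
    Real.HolderConjugate a.toReal b.toReal := by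
  have ha0 : a ≠ 0 := by intro h0; rw [h0] at hab; simp at hab
  have hb0 : b ≠ 0 := by intro h0; rw [h0] at hab; simp at hab
  have h1b : (0 : ℝ≥0∞) < 1/b := by
    simp [one_div, ENNReal.inv_pos, hb]
  have hlt : 1/a < 1 := by
    by_contra hle
    push_neg at hle
    have : (1 : ℝ≥0∞) < 1/a + 1/b :=
      lt_of_lt_of_le (ENNReal.lt_add_right ENNReal.one_ne_top h1b.ne') (add_le_add_left hle _)
    rw [hab] at this
    exact lt_irrefl _ this
  have h1a : 1 < a := by rwa [one_div, ENNReal.inv_lt_one] at hlt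
  rw [Real.holderConjugate_iff]
  constructor
  · rw [← ENNReal.toReal_one]
    exact (ENNReal.toReal_lt_toReal (by simp) ha).mpr h1a
  · have := congrArg ENNReal.toReal hab
    rw [ENNReal.toReal_add (by simp [one_div, ENNReal.inv_ne_top, ha0])
      (by simp [one_div, ENNReal.inv_ne_top, hb0])] at this
    simpa [one_div, ENNReal.toReal_inv] using this

lemma holder_two {a b : ℝ≥0∞} (hab : 1/a + 1/b = 1) {g h : Fin N → ℝ}
    (hg : ∀ n, 0 ≤ g n) (hh : ∀ n, 0 ≤ h n) :
    ∑ n, g n * h n ≤ gsNorm a g * gsNorm b h := by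
  by_cases ha : a = ∞
  · subst ha
    have hb : b = 1 := by
      simp only [one_div, ENNReal.inv_top, zero_add] at hab
      rwa [ENNReal.inv_eq_one] at hab
    subst hb
    rw [gs_one_eq_sum hh, Finset.mul_sum]
    refine Finset.sum_le_sum fun n _ => ?_
    refine mul_le_mul_of_nonneg_right ?_ (hh n)
    exact le_trans (Real.norm_of_nonneg (hg n)).symm.le (le_gs_top g n)
  by_cases hb : b = ∞
  · subst hb
    have ha1 : a = 1 := by
      simp only [one_div, ENNReal.inv_top, add_zero] at hab
      rwa [ENNReal.inv_eq_one] at hab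
    subst ha1
    rw [gs_one_eq_sum hg, Finset.sum_mul]
    refine Finset.sum_le_sum fun n _ => ?_
    refine mul_le_mul_of_nonneg_left ?_ (hg n)
    exact le_trans (Real.norm_of_nonneg (hh n)).symm.le (le_gs_top h n)
  · have hconj := enn_facts hab ha hb
    have := Real.inner_le_Lp_mul_Lq_of_nonneg (s := Finset.univ) hconj
      (fun i _ => hg i) (fun i _ => hh i)
    unfold gsNorm
    rw [if_neg ha, if_neg hb]
    simpa [Real.norm_of_nonneg (hg _), Real.norm_of_nonneg (hh _)] using this

/-- Real three-factor Hölder for finite sums. -/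
lemma real_holder_three {S T W : ℝ} (hS : 1 < S) (hT : 1 < T) (hW : 1 < W)
    (hsum : S⁻¹ + T⁻¹ + W⁻¹ = 1) {a b c : Fin N → ℝ}
    (ha : ∀ k, 0 ≤ a k) (hb : ∀ k, 0 ≤ b k) (hc : ∀ k, 0 ≤ c k) :
    ∑ k, a k * b k * c k ≤
      (∑ k, a k ^ S) ^ (1/S) * ((∑ k, b k ^ T) ^ (1/T) * (∑ k, c k ^ W) ^ (1/W)) := by
  have hT0 : (0:ℝ) < T := lt_trans one_pos hT
  have hW0 : (0:ℝ) < W := lt_trans one_pos hW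
  set M : ℝ := (T⁻¹ + W⁻¹)⁻¹ with hMdef
  have hMinvpos : (0:ℝ) < T⁻¹ + W⁻¹ := by positivity
  have hM0 : (0:ℝ) < M := by positivity
  have hMinv : M⁻¹ = T⁻¹ + W⁻¹ := by rw [hMdef, inv_inv]
  have hSM : Real.HolderConjugate S M := Real.holderConjugate_iff.mpr ⟨hS, by rw [hMinv]; linarith⟩
  have hWinvpos : (0:ℝ) < W⁻¹ := by positivity
  have hTinvpos : (0:ℝ) < T⁻¹ := by positivity
  have hMT : M < T := by
    rw [← inv_lt_inv₀ hT0 hM0, hMinv]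
    linarith
  have hMW : M < W := by
    rw [← inv_lt_inv₀ hW0 hM0, hMinv]
    linarith
  have hconj2 : Real.HolderConjugate (T/M) (W/M) := by
    rw [Real.holderConjugate_iff]
    constructor
    · rw [lt_div_iff₀ hM0, one_mul]; exact hMT
    · have hrr : M/T + M/W = M * (T⁻¹ + W⁻¹) := by ring
      rw [inv_div, inv_div, hrr, ← hMinv, mul_inv_cancel₀ hM0.ne']
  have hbc : ∀ k, 0 ≤ b k * c k := fun k => mul_nonneg (hb k) (hc k)
  calc ∑ k, a k * b k * c k = ∑ k, a k * (b k * c k) := by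
        exact Finset.sum_congr rfl fun k _ => mul_assoc _ _ _
    _ ≤ (∑ k, a k ^ S) ^ (1/S) * (∑ k, (b k * c k) ^ M) ^ (1/M) :=
        Real.inner_le_Lp_mul_Lq_of_nonneg Finset.univ hSM (fun i _ => ha i) (fun i _ => hbc i)
    _ ≤ (∑ k, a k ^ S) ^ (1/S) * ((∑ k, b k ^ T) ^ (1/T) * (∑ k, c k ^ W) ^ (1/W)) := by
        refine mul_le_mul_of_nonneg_left ?_ (Real.rpow_nonneg
          (Finset.sum_nonneg fun k _ => Real.rpow_nonneg (ha k) _) _)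
        -- key step: ℓ^M norm of product ≤ product of ℓ^T and ℓ^W norms
        have key := Real.inner_le_Lp_mul_Lq_of_nonneg (f := fun k => b k ^ M)
          (g := fun k => c k ^ M) Finset.univ hconj2
          (fun i _ => Real.rpow_nonneg (hb i) _) (fun i _ => Real.rpow_nonneg (hc i) _)
        have e1 : ∀ k : Fin N, (b k * c k) ^ M = b k ^ M * c k ^ M :=
          fun k => Real.mul_rpow (hb k) (hc k)
        have e2 : ∀ k : Fin N, (b k ^ M) ^ (T/M) = b k ^ T := fun k => by
          rw [← Real.rpow_mul (hb k), mul_div_cancel₀ _ hM0.ne']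
        have e3 : ∀ k : Fin N, (c k ^ M) ^ (W/M) = c k ^ W := fun k => by
          rw [← Real.rpow_mul (hc k), mul_div_cancel₀ _ hM0.ne']
        simp only [e2, e3] at key
        have key2 : ∑ k, (b k * c k) ^ M ≤
            (∑ k, b k ^ T) ^ (1/(T/M)) * (∑ k, c k ^ W) ^ (1/(W/M)) := by
          simpa only [e1] using key
        have hbT : (0:ℝ) ≤ ∑ k, b k ^ T := Finset.sum_nonneg fun k _ => Real.rpow_nonneg (hb k) _
        have hcW : (0:ℝ) ≤ ∑ k, c k ^ W := Finset.sum_nonneg fun k _ => Real.rpow_nonneg (hc k) _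
        calc (∑ k, (b k * c k) ^ M) ^ (1/M)
            ≤ ((∑ k, b k ^ T) ^ (1/(T/M)) * (∑ k, c k ^ W) ^ (1/(W/M))) ^ (1/M) :=
              Real.rpow_le_rpow (Finset.sum_nonneg fun k _ => Real.rpow_nonneg (hbc k) _)
                key2 (by positivity)
          _ = (∑ k, b k ^ T) ^ (1/T) * (∑ k, c k ^ W) ^ (1/W) := by
              rw [Real.mul_rpow (Real.rpow_nonneg hbT _) (Real.rpow_nonneg hcW _),
                ← Real.rpow_mul hbT, ← Real.rpow_mul hcW]
              have eT : (1/(T/M)) * (1/M) = 1/T := by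
                field_simp
              have eW : (1/(W/M)) * (1/M) = 1/W := by
                field_simp
              rw [eT, eW]

lemma enn_lt_one {x y z : ℝ≥0∞} (h : 1/x + 1/y + 1/z = 1) (hy : y ≠ ∞) : 1/x < 1 := by
  have hy' : (0:ℝ≥0∞) < 1/y := by simp [one_div, ENNReal.inv_pos, hy]
  by_contra hle
  push_neg at hle
  have h1 : (1:ℝ≥0∞) < 1/x + 1/y :=
    lt_of_lt_of_le (ENNReal.lt_add_right ENNReal.one_ne_top hy'.ne') (add_le_add_left hle _)
  have h2 : (1:ℝ≥0∞) < 1/x + 1/y + 1/z := lt_of_lt_of_le h1 le_self_add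
  rw [h] at h2
  exact lt_irrefl _ h2

lemma enn_ne_zero {x y z : ℝ≥0∞} (h : 1/x + 1/y + 1/z = 1) : x ≠ 0 := by
  intro h0; rw [h0] at h; simp at h

lemma enn_one_lt_toReal {x : ℝ≥0∞} (hx : x ≠ ∞) (h : 1/x < 1) : 1 < x.toReal := by
  rw [one_div, ENNReal.inv_lt_one] at h
  rw [← ENNReal.toReal_one]
  exact (ENNReal.toReal_lt_toReal (by simp) hx).mpr h

lemma holder_three {s t w : ℝ≥0∞} (hstw : 1/s + 1/t + 1/w = 1)
    {a b c : Fin N → ℝ} (ha : ∀ k, 0 ≤ a k) (hb : ∀ k, 0 ≤ b k) (hc : ∀ k, 0 ≤ c k) :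
    ∑ k, a k * b k * c k ≤ gsNorm s a * gsNorm t b * gsNorm w c := by
  by_cases hs : s = ∞
  · subst hs
    have h2 : 1/t + 1/w = 1 := by
      rw [one_div, ENNReal.inv_top, zero_add] at hstw
      exact hstw
    calc ∑ k, a k * b k * c k ≤ ∑ k, gsNorm ∞ a * (b k * c k) := by
          refine Finset.sum_le_sum fun k _ => ?_
          rw [mul_assoc]
          exact mul_le_mul_of_nonneg_right
            (le_trans (Real.norm_of_nonneg (ha k)).symm.le (le_gs_top a k))
            (mul_nonneg (hb k) (hc k))
      _ = gsNorm ∞ a * ∑ k, b k * c k := by rw [← Finset.mul_sum]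
      _ ≤ gsNorm ∞ a * (gsNorm t b * gsNorm w c) :=
          mul_le_mul_of_nonneg_left (holder_two h2 hb hc) (gs_nonneg _ _)
      _ = _ := by ring
  by_cases ht : t = ∞
  · subst ht
    have h2 : 1/s + 1/w = 1 := by
      rw [one_div (∞ : ℝ≥0∞), ENNReal.inv_top, add_zero] at hstw
      exact hstw
    calc ∑ k, a k * b k * c k ≤ ∑ k, gsNorm ∞ b * (a k * c k) := by
          refine Finset.sum_le_sum fun k _ => ?_
          have he : a k * b k * c k = b k * (a k * c k) := by ring
          rw [he]
          exact mul_le_mul_of_nonneg_right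
            (le_trans (Real.norm_of_nonneg (hb k)).symm.le (le_gs_top b k))
            (mul_nonneg (ha k) (hc k))
      _ = gsNorm ∞ b * ∑ k, a k * c k := by rw [← Finset.mul_sum]
      _ ≤ gsNorm ∞ b * (gsNorm s a * gsNorm w c) :=
          mul_le_mul_of_nonneg_left (holder_two h2 ha hc) (gs_nonneg _ _)
      _ = _ := by ring
  by_cases hw : w = ∞
  · subst hw
    have h2 : 1/s + 1/t = 1 := by
      rw [one_div (∞ : ℝ≥0∞), ENNReal.inv_top, add_zero] at hstw
      exact hstw
    calc ∑ k, a k * b k * c k ≤ ∑ k, gsNorm ∞ c * (a k * b k) := by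
          refine Finset.sum_le_sum fun k _ => ?_
          have he : a k * b k * c k = c k * (a k * b k) := by ring
          rw [he]
          exact mul_le_mul_of_nonneg_right
            (le_trans (Real.norm_of_nonneg (hc k)).symm.le (le_gs_top c k))
            (mul_nonneg (ha k) (hb k))
      _ = gsNorm ∞ c * ∑ k, a k * b k := by rw [← Finset.mul_sum]
      _ ≤ gsNorm ∞ c * (gsNorm s a * gsNorm t b) :=
          mul_le_mul_of_nonneg_left (holder_two h2 ha hb) (gs_nonneg _ _)
      _ = _ := by ring
  · -- all finite
    have hs0 : s ≠ 0 := enn_ne_zero hstw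
    have hstw_t : 1/t + 1/s + 1/w = 1 := by
      calc 1/t + 1/s + 1/w = 1/s + 1/t + 1/w := by ring
        _ = 1 := hstw
    have hstw_w : 1/w + 1/s + 1/t = 1 := by
      calc 1/w + 1/s + 1/t = 1/s + 1/t + 1/w := by ring
        _ = 1 := hstw
    have ht0 : t ≠ 0 := enn_ne_zero hstw_t
    have hw0 : w ≠ 0 := enn_ne_zero hstw_w
    have hS : 1 < s.toReal := enn_one_lt_toReal hs (enn_lt_one hstw ht)
    have hT : 1 < t.toReal := enn_one_lt_toReal ht (enn_lt_one hstw_t hs)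
    have hW : 1 < w.toReal := enn_one_lt_toReal hw (enn_lt_one hstw_w hs)
    have hsum : s.toReal⁻¹ + t.toReal⁻¹ + w.toReal⁻¹ = 1 := by
      have := congrArg ENNReal.toReal hstw
      rw [ENNReal.toReal_add (by
            exact ENNReal.add_ne_top.2 ⟨by simp [one_div, ENNReal.inv_ne_top, hs0],
              by simp [one_div, ENNReal.inv_ne_top, ht0]⟩)
          (by simp [one_div, ENNReal.inv_ne_top, hw0]),
        ENNReal.toReal_add (by simp [one_div, ENNReal.inv_ne_top, hs0])
          (by simp [one_div, ENNReal.inv_ne_top, ht0])] at this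
      simpa [one_div, ENNReal.toReal_inv] using this
    have key := real_holder_three hS hT hW hsum ha hb hc
    unfold gsNorm
    rw [if_neg hs, if_neg ht, if_neg hw]
    simp only [Real.norm_of_nonneg (ha _), Real.norm_of_nonneg (hb _),
      Real.norm_of_nonneg (hc _)]
    calc ∑ k, a k * b k * c k ≤ _ := key
      _ = _ := by ring

end aux

lemma gft_bound {𝕂 : Type*} [RCLike 𝕂] {X : Type*} [NormedAddCommGroup X]
    [NormedSpace 𝕂 X] {N : ℕ} {q q' : ℝ≥0∞} (hqq' : 1/q + 1/q' = 1)
    (u : Fin N → Fin N → 𝕂) (f : Fin N → X) (k : Fin N) :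
    ‖gft u f k‖ ≤ gsNorm q' (u k) * gsNorm q f := by
  have h1 : ‖gft u f k‖ ≤ ∑ n, ‖u k n‖ * ‖f n‖ := by
    refine (norm_sum_le _ _).trans (le_of_eq (Finset.sum_congr rfl fun n _ => ?_))
    rw [norm_smul, RCLike.norm_conj]
  have h2 := holder_two (a := q') (b := q) (by rw [add_comm] at hqq'; exact hqq')
    (g := fun n => ‖u k n‖) (h := fun n => ‖f n‖)
    (fun n => norm_nonneg _) (fun n => norm_nonneg _)
  refine h1.trans (h2.trans_eq ?_)
  rw [gs_congr q' (fun n => norm_norm _), gs_congr q (fun n => norm_norm _)]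

/-- Young's inequality on graphs:
`‖α*f‖_r ≤ ‖U*‖_{s,r}·‖U‖_{p',t}·‖U‖_{q',w}·‖α‖_p·‖f‖_q`. -/
theorem gconv_young {𝕂 : Type*} [RCLike 𝕂] {X : Type*} [NormedAddCommGroup X]
    [NormedSpace 𝕂 X] [CompleteSpace X] {N : ℕ} (hN : 0 < N)
    (u : Fin N → Fin N → 𝕂) (hU : OrthoBasis u)
    (s t w : ℝ≥0∞) (hs : 1 ≤ s) (ht : 1 ≤ t) (hw : 1 ≤ w)
    (hstw : 1 / s + 1 / t + 1 / w = 1)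
    (p p' q q' r : ℝ≥0∞) (hp : 1 ≤ p) (hq : 1 ≤ q) (hr : 1 ≤ r)
    (hpp' : 1 / p + 1 / p' = 1) (hqq' : 1 / q + 1 / q' = 1)
    (α : Fin N → 𝕂) (f : Fin N → X) :
    gsNorm r (gconv u α f) ≤
      mixNorm s r (fun n k => u k n) * mixNorm p' t u * mixNorm q' w u *
        gsNorm p α * gsNorm q f := by
  haveI : Nonempty (Fin N) := Fin.pos_iff_nonempty.mp hN
  have hPα0 : 0 ≤ gsNorm p α := gs_nonneg _ _
  have hQf0 : 0 ≤ gsNorm q f := gs_nonneg _ _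
  have hgfta : ∀ k, ‖gft u α k‖ ≤ gsNorm p' (u k) * gsNorm p α :=
    fun k => gft_bound hpp' u α k
  have hgftf : ∀ k, ‖gft u f k‖ ≤ gsNorm q' (u k) * gsNorm q f :=
    fun k => gft_bound hqq' u f k
  set C : ℝ := mixNorm p' t u * mixNorm q' w u * gsNorm p α * gsNorm q f with hC
  have hMt : 0 ≤ mixNorm p' t u := by unfold mixNorm; exact gs_nonneg _ _
  have hMw : 0 ≤ mixNorm q' w u := by unfold mixNorm; exact gs_nonneg _ _
  have hC0 : 0 ≤ C := mul_nonneg (mul_nonneg (mul_nonneg hMt hMw) hPα0) hQf0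
  have key : ∀ n, ‖gconv u α f n‖ ≤ C * gsNorm s (fun k => u k n) := by
    intro n
    have step1 : ‖gconv u α f n‖ ≤ ∑ k, ‖u k n‖ * (‖gft u α k‖ * ‖gft u f k‖) := by
      refine (norm_sum_le _ _).trans (le_of_eq (Finset.sum_congr rfl fun k _ => ?_))
      rw [norm_smul, norm_smul]
    have step2 : ∑ k, ‖u k n‖ * (‖gft u α k‖ * ‖gft u f k‖) ≤
        ∑ k, (gsNorm p α * gsNorm q f) *
          (‖u k n‖ * (gsNorm p' (u k) * gsNorm q' (u k))) := by
      refine Finset.sum_le_sum fun k _ => ?_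
      have hm := mul_le_mul (hgfta k) (hgftf k) (norm_nonneg _)
        (mul_nonneg (gs_nonneg _ _) hPα0)
      calc ‖u k n‖ * (‖gft u α k‖ * ‖gft u f k‖)
          ≤ ‖u k n‖ * ((gsNorm p' (u k) * gsNorm p α) * (gsNorm q' (u k) * gsNorm q f)) :=
            mul_le_mul_of_nonneg_left hm (norm_nonneg _)
        _ = (gsNorm p α * gsNorm q f) *
              (‖u k n‖ * (gsNorm p' (u k) * gsNorm q' (u k))) := by ring
    have step3 : ∑ k, ‖u k n‖ * (gsNorm p' (u k) * gsNorm q' (u k)) ≤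
        gsNorm s (fun k => ‖u k n‖) * gsNorm t (fun k => gsNorm p' (u k)) *
          gsNorm w (fun k => gsNorm q' (u k)) := by
      have h3 := holder_three hstw (a := fun k => ‖u k n‖)
        (b := fun k => gsNorm p' (u k)) (c := fun k => gsNorm q' (u k))
        (fun k => norm_nonneg _) (fun k => gs_nonneg _ _) (fun k => gs_nonneg _ _)
      refine le_trans (le_of_eq ?_) h3
      exact Finset.sum_congr rfl fun k _ => (mul_assoc _ _ _).symm
    have hrow : gsNorm s (fun k => ‖u k n‖) = gsNorm s (fun k => u k n) :=
      gs_congr s (fun k => norm_norm _)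
    calc ‖gconv u α f n‖ ≤ _ := step1
      _ ≤ _ := step2
      _ = (gsNorm p α * gsNorm q f) *
            ∑ k, ‖u k n‖ * (gsNorm p' (u k) * gsNorm q' (u k)) := by
          rw [← Finset.mul_sum]
      _ ≤ (gsNorm p α * gsNorm q f) *
            (gsNorm s (fun k => ‖u k n‖) * gsNorm t (fun k => gsNorm p' (u k)) *
              gsNorm w (fun k => gsNorm q' (u k))) :=
          mul_le_mul_of_nonneg_left step3 (mul_nonneg hPα0 hQf0)
      _ = C * gsNorm s (fun k => u k n) := by
          rw [hrow, hC]
          unfold mixNorm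
          ring
  have mono := gs_mono r (f := gconv u α f)
    (g := fun n => C * gsNorm s (fun k => u k n)) key
  rw [gs_const_mul hN hr hC0 (fun n => gs_nonneg _ _)] at mono
  refine mono.trans (le_of_eq ?_)
  rw [hC]
  unfold mixNorm
  ring
end

section
/- Suppose X is a Hilbert space over 𝕂 and fix m ∈ V. Then for every signal f : V → X, ‖T_m f‖_2 ≤ ‖u(m)‖_∞ · ‖f‖_2, where ‖u(m)‖_∞ = max_{1≤k≤N} |u_k(m)|. Moreover, if X is nontrivial, this bound is sharp: the operator norm of T_m : L^2(V,X) → L^2(V,X) equals ‖u(m)‖_∞. -/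
open Finset
open scoped ENNReal InnerProductSpace

lemma ortho_parseval {𝕂 : Type*} [RCLike 𝕂] {X : Type*} [NormedAddCommGroup X]
    [InnerProductSpace 𝕂 X] {N : ℕ} (w : Fin N → Fin N → 𝕂)
    (hw : ∀ i j, ∑ k, (starRingEnd 𝕂) (w i k) * w j k = if i = j then (1:𝕂) else 0)
    (c : Fin N → X) :
    ∑ k, ‖∑ i, w i k • c i‖ ^ 2 = ∑ i, ‖c i‖ ^ 2 := by
  have key : ∑ k, (⟪∑ i, w i k • c i, ∑ i, w i k • c i⟫_𝕂)
      = ∑ i, ⟪c i, c i⟫_𝕂 := by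
    have h1 : ∀ k, ⟪∑ i, w i k • c i, ∑ i, w i k • c i⟫_𝕂
        = ∑ i, ∑ j, ((starRingEnd 𝕂) (w i k) * w j k) * ⟪c i, c j⟫_𝕂 := by
      intro k
      rw [sum_inner]
      refine Finset.sum_congr rfl fun i _ => ?_
      rw [inner_sum]
      refine Finset.sum_congr rfl fun j _ => ?_
      rw [inner_smul_left, inner_smul_right]
      ring
    simp_rw [h1]
    rw [Finset.sum_comm]
    calc ∑ i, ∑ k, ∑ j, ((starRingEnd 𝕂) (w i k) * w j k) * ⟪c i, c j⟫_𝕂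
        = ∑ i, ∑ j, (∑ k, (starRingEnd 𝕂) (w i k) * w j k) * ⟪c i, c j⟫_𝕂 := by
          refine Finset.sum_congr rfl fun i _ => ?_
          rw [Finset.sum_comm]
          simp_rw [Finset.sum_mul]
      _ = ∑ i, ⟪c i, c i⟫_𝕂 := by
          refine Finset.sum_congr rfl fun i _ => ?_
          simp_rw [hw]
          simp
  have := congrArg (RCLike.re (K := 𝕂)) key
  simpa [map_sum, inner_self_eq_norm_sq] using this

lemma ortho_dual {𝕂 : Type*} [RCLike 𝕂] {N : ℕ} {u : Fin N → Fin N → 𝕂}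
    (hU : OrthoBasis u) (n n' : Fin N) :
    ∑ k, (starRingEnd 𝕂) (u k n) * u k n' = if n = n' then (1:𝕂) else 0 := by
  classical
  set A : Matrix (Fin N) (Fin N) 𝕂 := Matrix.of u with hA
  have hAAH : A * A.conjTranspose = 1 := by
    ext k l
    have h2 := congrArg (starRingEnd 𝕂) (hU k l)
    simp only [map_sum, map_mul, RCLike.conj_conj] at h2
    rw [apply_ite (starRingEnd 𝕂), map_one, map_zero] at h2
    simp only [Matrix.mul_apply, Matrix.conjTranspose_apply, Matrix.one_apply, hA,
      Matrix.of_apply, Matrix.star_apply, RCLike.star_def]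
    rw [show ∑ j, u k j * (starRingEnd 𝕂) (u l j)
        = ∑ j, u k j * (starRingEnd 𝕂) (u l j) from rfl]
    exact h2
  have hAHA : A.conjTranspose * A = 1 := mul_eq_one_comm.mp hAAH
  have h3 := congrFun (congrFun hAHA n) n'
  simp only [Matrix.mul_apply, Matrix.conjTranspose_apply, Matrix.one_apply, hA,
    Matrix.of_apply, Matrix.star_apply, RCLike.star_def] at h3
  exact h3

lemma gsNorm_two_eq {E : Type*} [NormedAddCommGroup E] {N : ℕ} (f : Fin N → E) :
    gsNorm 2 f = Real.sqrt (∑ n, ‖f n‖ ^ 2) := by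
  have h2 : ((2:ℝ≥0∞)).toReal = (2:ℝ) := by norm_num
  simp only [gsNorm, if_neg (by norm_num : (2:ℝ≥0∞) ≠ ∞), h2]
  rw [Real.sqrt_eq_rpow]
  congr 1
  refine Finset.sum_congr rfl fun n _ => ?_
  rw [show (2:ℝ) = ((2:ℕ):ℝ) by norm_num, Real.rpow_natCast]

lemma gsNorm_inf_eq {E : Type*} [NormedAddCommGroup E] {N : ℕ} (f : Fin N → E) :
    gsNorm ∞ f = ⨆ n, ‖f n‖ := by simp [gsNorm]

lemma norm_sq_one_of_ortho {𝕂 : Type*} [RCLike 𝕂] {N : ℕ} {v : Fin N → 𝕂}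
    (h : ∑ n, (starRingEnd 𝕂) (v n) * v n = 1) : ∑ n, ‖v n‖ ^ 2 = 1 := by
  have h2 := congrArg (RCLike.re (K := 𝕂)) h
  rw [map_sum] at h2
  have h3 : ∀ n, RCLike.re ((starRingEnd 𝕂) (v n) * v n) = ‖v n‖ ^ 2 := by
    intro n
    rw [RCLike.conj_mul]
    norm_cast
  rw [Finset.sum_congr rfl fun n _ => h3 n] at h2
  simpa using h2

/-- for a Hilbert space `X`, `‖T_m f‖_2 ≤ ‖u(m)‖_∞·‖f‖_2`, and for
nontrivial `X` the bound is sharp (attained at a nonzero signal). -/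
theorem gtrans_norm_two {𝕂 : Type*} [RCLike 𝕂] {X : Type*} [NormedAddCommGroup X]
    [InnerProductSpace 𝕂 X] [CompleteSpace X] {N : ℕ} (hN : 0 < N)
    (u : Fin N → Fin N → 𝕂) (hU : OrthoBasis u) (m : Fin N) :
    (∀ f : Fin N → X,
      gsNorm 2 (gtrans u m f) ≤ gsNorm ∞ (fun k => u k m) * gsNorm 2 f) ∧
    (Nontrivial X → ∃ f : Fin N → X, f ≠ 0 ∧
      gsNorm 2 (gtrans u m f) = gsNorm ∞ (fun k => u k m) * gsNorm 2 f) := by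
  haveI : Nonempty (Fin N) := Fin.pos_iff_nonempty.mp hN
  -- the sup norm
  set M : ℝ := ⨆ k, ‖u k m‖ with hM
  have hMinf : gsNorm ∞ (fun k => u k m) = M := gsNorm_inf_eq _
  have hM0 : 0 ≤ M := Real.iSup_nonneg fun k => norm_nonneg _
  have hMle : ∀ k, ‖u k m‖ ≤ M := fun k => le_ciSup (f := fun k => ‖u k m‖) (Set.Finite.bddAbove (Set.finite_range _)) k
  -- Parseval for synthesis
  have hsynth : ∀ c : Fin N → X, ∑ n, ‖∑ k, u k n • c k‖ ^ 2 = ∑ k, ‖c k‖ ^ 2 :=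
    fun c => ortho_parseval u hU c
  -- Parseval for GFT
  have hana : ∀ f : Fin N → X, ∑ k, ‖gft u f k‖ ^ 2 = ∑ n, ‖f n‖ ^ 2 := by
    intro f
    have hw : ∀ n n' : Fin N, ∑ k, (starRingEnd 𝕂) ((starRingEnd 𝕂) (u k n)) *
        (starRingEnd 𝕂) (u k n') = if n = n' then (1:𝕂) else 0 := by
      intro n n'
      have := congrArg (starRingEnd 𝕂) (ortho_dual hU n n')
      rw [apply_ite (starRingEnd 𝕂), map_one, map_zero] at this
      rw [← this, map_sum]
      exact Finset.sum_congr rfl fun k _ => by rw [map_mul]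
    have := ortho_parseval (𝕂 := 𝕂) (X := X) (fun n k => (starRingEnd 𝕂) (u k n)) hw f
    simpa [gft] using this
  -- rewrite T_m f as synthesis of c
  have hTnorm : ∀ f : Fin N → X,
      ∑ n, ‖gtrans u m f n‖ ^ 2 = ∑ k, ‖(starRingEnd 𝕂) (u k m) • gft u f k‖ ^ 2 := by
    intro f
    have : ∀ n, gtrans u m f n = ∑ k, u k n • ((starRingEnd 𝕂) (u k m) • gft u f k) := by
      intro n
      exact Finset.sum_congr rfl fun k _ => by rw [smul_smul]
    simp_rw [this]
    exact hsynth _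
  have hcnorm : ∀ (f : Fin N → X) (k : Fin N),
      ‖(starRingEnd 𝕂) (u k m) • gft u f k‖ = ‖u k m‖ * ‖gft u f k‖ := by
    intro f k
    rw [norm_smul, RCLike.norm_conj]
  constructor
  · intro f
    rw [hMinf, gsNorm_two_eq, gsNorm_two_eq, hTnorm]
    have hb : ∑ k, ‖(starRingEnd 𝕂) (u k m) • gft u f k‖ ^ 2
        ≤ M ^ 2 * ∑ n, ‖f n‖ ^ 2 := by
      rw [← hana f, Finset.mul_sum]
      refine Finset.sum_le_sum fun k _ => ?_
      rw [hcnorm, mul_pow]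
      exact mul_le_mul_of_nonneg_right (pow_le_pow_left₀ (norm_nonneg _) (hMle k) 2)
        (by positivity)
    calc Real.sqrt (∑ k, ‖(starRingEnd 𝕂) (u k m) • gft u f k‖ ^ 2)
        ≤ Real.sqrt (M ^ 2 * ∑ n, ‖f n‖ ^ 2) := Real.sqrt_le_sqrt hb
      _ = M * Real.sqrt (∑ n, ‖f n‖ ^ 2) := by
          rw [Real.sqrt_mul (by positivity), Real.sqrt_sq hM0]
  · intro hX
    obtain ⟨x, hx⟩ := exists_ne (0 : X)
    obtain ⟨k₀, hk₀⟩ := Finite.exists_max (fun k => ‖u k m‖)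
    have hMk₀ : M = ‖u k₀ m‖ :=
      le_antisymm (ciSup_le hk₀) (hMle k₀)
    refine ⟨fun n => u k₀ n • x, ?_, ?_⟩
    · -- nonzero
      have h1 : ∑ n, ‖u k₀ n‖ ^ 2 = 1 := norm_sq_one_of_ortho (by simpa using hU k₀ k₀)
      have : ∃ n, u k₀ n ≠ 0 := by
        by_contra h
        push_neg at h
        simp [h] at h1
      obtain ⟨n, hn⟩ := this
      intro hf
      have := congrFun hf n
      simp only [Pi.zero_apply] at this
      exact hx (by simpa [hn] using (smul_eq_zero.mp this).resolve_left hn)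
    · set f : Fin N → X := fun n => u k₀ n • x with hf
      have h1 : ∑ n, ‖u k₀ n‖ ^ 2 = 1 := norm_sq_one_of_ortho (by simpa using hU k₀ k₀)
      have hfhat : ∀ k, gft u f k = (if k = k₀ then (1:𝕂) else 0) • x := by
        intro k
        have := hU k k₀
        simp only [gft, hf, smul_smul]
        rw [← Finset.sum_smul, this]
      have hTf : ∀ n, gtrans u m f n = (u k₀ n * (starRingEnd 𝕂) (u k₀ m)) • x := by
        intro n
        simp only [gtrans, hfhat, smul_smul]
        rw [Finset.sum_congr rfl (fun k _ => by
          rw [mul_ite, mul_one, mul_zero, ite_smul, zero_smul])]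
        simp
      have hNf : gsNorm (2:ℝ≥0∞) f = ‖x‖ := by
        rw [gsNorm_two_eq]
        have : ∀ n, ‖f n‖ ^ 2 = ‖u k₀ n‖ ^ 2 * ‖x‖ ^ 2 := by
          intro n; rw [hf]; simp [norm_smul, mul_pow]
        simp_rw [this]
        rw [← Finset.sum_mul, h1, one_mul, Real.sqrt_sq (norm_nonneg _)]
      have hNTf : gsNorm (2:ℝ≥0∞) (gtrans u m f) = ‖u k₀ m‖ * ‖x‖ := by
        rw [gsNorm_two_eq]
        have : ∀ n, ‖gtrans u m f n‖ ^ 2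
            = ‖u k₀ n‖ ^ 2 * (‖u k₀ m‖ * ‖x‖) ^ 2 := by
          intro n
          rw [hTf n, norm_smul, norm_mul, RCLike.norm_conj]
          ring
        simp_rw [this]
        rw [← Finset.sum_mul, h1, one_mul, Real.sqrt_sq (by positivity)]
      rw [hNTf, hMinf, hNf, hMk₀]
end
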